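/- Interlacing corollary of the Stubborn Real Roots Theorem: let P and Q be real polynomials of degrees n and n−1 respectively whose roots are all real and positive and interlace, i.e., p₁ < q₁ < p₂ < q₂ < ... < q_{n−1} < p_n, and suppose |P(0)| > |Q(0)|. Then every root of S = P + Q has strictly positive real part. -/

import Mathlib

open Polynomial Complex

lemma poly_fact (P : Polynomial ℝ) (k : ℕ) (p : Fin k → ℝ) (hdeg : P.natDegree = k)
    (hroots : P.roots = ↑(List.ofFn p)) :
    P = C P.leadingCoeff * ∏ i, (X - C (p i)) := by
  have hcard : Multiset.card P.roots = P.natDegree := by rw [hroots]; simp [hdeg]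
  conv_lhs => rw [← Polynomial.C_leadingCoeff_mul_prod_multiset_X_sub_C (p := P) hcard]
  rw [hroots]
  congr 1
  rw [Multiset.map_coe, Multiset.prod_coe, List.map_ofFn, List.prod_ofFn]
  rfl

set_option maxHeartbeats 1000000 in
theorem stubborn_real_roots_interlacing (n : ℕ) (hn : 1 ≤ n) (P Q : Polynomial ℝ)
    (hP0 : P ≠ 0) (hQ0 : Q ≠ 0) (hPdeg : P.natDegree = n) (hQdeg : Q.natDegree = n - 1)
    (p : Fin n → ℝ) (q : Fin (n - 1) → ℝ)
    (hproots : P.roots = ↑(List.ofFn p)) (hqroots : Q.roots = ↑(List.ofFn q))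
    (hppos : ∀ i, 0 < p i) (hqpos : ∀ j, 0 < q j)
    (hinterlace : ∀ j : Fin (n - 1),
      p ⟨j.val, by omega⟩ < q j ∧ q j < p ⟨j.val + 1, by omega⟩)
    (h0 : |Q.eval 0| < |P.eval 0|) :
    ∀ z : ℂ, ((P + Q).map (algebraMap ℝ ℂ)).eval z = 0 → 0 < z.re := by
  obtain ⟨m, rfl⟩ : ∃ m, n = m + 1 := ⟨n - 1, by omega⟩
  intro z hz
  by_contra hre
  push_neg at hre
  -- basic data
  have hlcP : P.leadingCoeff ≠ 0 := leadingCoeff_ne_zero.mpr hP0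
  have hlcQ : Q.leadingCoeff ≠ 0 := leadingCoeff_ne_zero.mpr hQ0
  set a := P.leadingCoeff with ha
  set b := Q.leadingCoeff with hb
  have pmono : StrictMono p := by
    rw [Fin.strictMono_iff_lt_succ]
    intro j
    exact lt_trans (hinterlace j).1 (hinterlace j).2
  have pinj : Function.Injective p := pmono.injective
  -- factorizations
  have hPfac : P = C a * ∏ i, (X - C (p i)) := poly_fact P (m + 1) p hPdeg hproots
  have hQfac : Q = C b * ∏ j, (X - C (q j)) := poly_fact Q m q hQdeg hqroots
  -- q vs p comparisons
  have hqp : ∀ (i : Fin (m + 1)) (j : Fin m), ((j : ℕ) < (i : ℕ) → q j < p i)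
      ∧ ((i : ℕ) ≤ (j : ℕ) → p i < q j) := by
    intro i j
    constructor
    · intro hij
      exact lt_of_lt_of_le (hinterlace j).2 (pmono.monotone (by simp [Fin.le_def]; omega))
    · intro hij
      exact lt_of_le_of_lt (pmono.monotone (a := i) (b := ⟨j, by omega⟩) (by simp [Fin.le_def]; omega))
        (hinterlace j).1
  -- the denominators
  set D : Fin (m + 1) → ℝ := fun i => ∏ j : Fin m, (p i - p (i.succAbove j)) with hD
  have hDne : ∀ i, D i ≠ 0 := by
    intro i
    refine Finset.prod_ne_zero_iff.mpr fun j _ => ?_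
    exact sub_ne_zero_of_ne (fun h => (Fin.succAbove_ne i j) (pinj h).symm)
  set c : Fin (m + 1) → ℝ := fun i => Q.eval (p i) / (a * D i) with hc
  -- sign of c i
  have hsign : ∀ i, 0 < c i * (a * b) := by
    intro i
    have hQp : Q.eval (p i) = b * ∏ j, (p i - q j) := by
      conv_lhs => rw [hQfac]
      simp [eval_prod]
    have hE : 0 < ∏ j : Fin m, ((p i - q j) * (p i - p (i.succAbove j))) := by
      refine Finset.prod_pos fun j _ => ?_
      rcases lt_or_ge (j.castSucc) i with h | h
      · have h1 : q j < p i := (hqp i j).1 (by simpa [Fin.lt_def] using h)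
        have h2 : p (i.succAbove j) < p i := by
          rw [Fin.succAbove_of_castSucc_lt _ _ h]
          exact pmono h
        nlinarith
      · have h1 : p i < q j := (hqp i j).2 (by simpa [Fin.le_def] using h)
        have h2 : p i < p (i.succAbove j) := by
          rw [Fin.succAbove_of_le_castSucc _ _ h]
          exact pmono (lt_of_le_of_lt h (Fin.castSucc_lt_succ (i := j)))
        nlinarith
    have hE' : (∏ j : Fin m, ((p i - q j) * (p i - p (i.succAbove j))))
        = (∏ j, (p i - q j)) * D i :=
      Finset.prod_mul_distrib
    have hb2 : 0 < b ^ 2 := by rcases hlcQ.lt_or_gt with h | h <;> nlinarith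
    have hD2 : 0 < (D i) ^ 2 := by rcases (hDne i).lt_or_gt with h | h <;> nlinarith
    have hci : c i * (a * D i) = Q.eval (p i) :=
      div_mul_cancel₀ _ (mul_ne_zero hlcP (hDne i))
    rw [hQp] at hci
    have hmul : c i * (a * b) * (D i) ^ 2
        = b ^ 2 * ((∏ j, (p i - q j)) * D i) := by
      linear_combination (b * D i) * hci
    rw [← hE'] at hmul
    nlinarith [mul_pos hb2 hE, hD2]
  -- partial fraction identity
  set R : Polynomial ℝ := ∑ i, C (c i * a) * ∏ j, (X - C (p (i.succAbove j))) with hR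
  have hQR : Q = R := by
    rw [← sub_eq_zero]
    apply Polynomial.eq_zero_of_natDegree_lt_card_of_eval_eq_zero _ pinj
    · intro i
      simp only [eval_sub]
      rw [sub_eq_zero, hR, Polynomial.eval_finset_sum, Finset.sum_eq_single i]
      · simp only [eval_mul, eval_C, eval_prod, eval_sub, eval_X]
        show Q.eval (p i) = c i * a * D i
        rw [mul_assoc]
        exact (div_mul_cancel₀ _ (mul_ne_zero hlcP (hDne i))).symm
      · intro t _ htne
        obtain ⟨j, hj⟩ := Fin.exists_succAbove_eq (Ne.symm htne)
        rw [eval_mul, eval_prod]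
        apply mul_eq_zero_of_right
        apply Finset.prod_eq_zero (Finset.mem_univ j)
        simp [hj]
      · intro h
        exact absurd (Finset.mem_univ i) h
    · rw [Fintype.card_fin]
      have hQm : Q.natDegree = m := hQdeg
      have hRm : R.natDegree ≤ m := by
        rw [hR]
        refine Polynomial.natDegree_sum_le_of_forall_le _ _ fun i _ => ?_
        refine le_trans Polynomial.natDegree_mul_le ?_
        rw [Polynomial.natDegree_C]
        have h1 : (∏ j : Fin m, (X - C (p (i.succAbove j)))).natDegree ≤ m := by
          refine le_trans (Polynomial.natDegree_prod_le _ _) ?_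
          simp [Polynomial.natDegree_X_sub_C]
        omega
      have h2 : (Q - R).natDegree ≤ m :=
        le_trans (Polynomial.natDegree_sub_le Q R) (max_le (le_of_eq hQm) hRm)
      omega
  -- value at 0
  have hP0e : P.eval 0 = a * ∏ k, (0 - p k) := by
    conv_lhs => rw [hPfac]
    simp [eval_prod]
  have hP0ne : P.eval 0 ≠ 0 := by
    rw [hP0e]
    refine mul_ne_zero hlcP (Finset.prod_ne_zero_iff.mpr fun i _ => ?_)
    have := hppos i
    intro h
    linarith [h]
  have hsum0 : ∑ i, c i / p i = -(Q.eval 0 / P.eval 0) := by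
    have hterm : ∀ i, (c i * a) * ∏ j, ((0:ℝ) - p (i.succAbove j))
        = -(c i / p i) * P.eval 0 := by
      intro i
      rw [hP0e, Fin.prod_univ_succAbove (fun k => (0:ℝ) - p k) i]
      have hpne : p i ≠ 0 := ne_of_gt (hppos i)
      field_simp
      ring
    have hQ0e : Q.eval 0 = ∑ i, (c i * a) * ∏ j, ((0:ℝ) - p (i.succAbove j)) := by
      conv_lhs => rw [hQR, hR]
      rw [Polynomial.eval_finset_sum]
      simp [eval_prod]
    have hQ0e' : Q.eval 0 = (∑ i, -(c i / p i)) * P.eval 0 := by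
      rw [hQ0e, Finset.sum_mul]
      exact Finset.sum_congr rfl fun i _ => hterm i
    rw [hQ0e', mul_div_cancel_right₀ _ hP0ne, Finset.sum_neg_distrib, neg_neg]
  have habs0 : |∑ i, c i / p i| < 1 := by
    rw [hsum0, _root_.abs_neg, abs_div]
    rw [div_lt_one (lt_of_le_of_lt (_root_.abs_nonneg _) h0)]
    exact h0
  have hsame : ∑ i, |c i| / p i = |∑ i, c i / p i| := by
    have hab : a * b ≠ 0 := mul_ne_zero hlcP hlcQ
    rcases hab.lt_or_gt with hab' | hab'
    · have hneg : ∀ i, c i < 0 := fun i => by nlinarith [hsign i]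
      rw [_root_.abs_of_nonpos (Finset.sum_nonpos fun i _ =>
        div_nonpos_of_nonpos_of_nonneg (hneg i).le (hppos i).le)]
      rw [← Finset.sum_neg_distrib]
      exact Finset.sum_congr rfl fun i _ => by
        rw [_root_.abs_of_neg (hneg i), neg_div]
    · have hpos : ∀ i, 0 < c i := fun i => by nlinarith [hsign i]
      rw [_root_.abs_of_nonneg (Finset.sum_nonneg fun i _ =>
        div_nonneg (hpos i).le (hppos i).le)]
      exact Finset.sum_congr rfl fun i _ => by rw [_root_.abs_of_pos (hpos i)]
  -- complex side
  have hwne : ∀ i : Fin (m + 1), z - (p i : ℂ) ≠ 0 := by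
    intro i h
    have := congrArg Complex.re h
    simp only [Complex.sub_re, Complex.ofReal_re, Complex.zero_re] at this
    have := hppos i
    linarith
  have hPzne : (a : ℂ) * ∏ i, (z - (p i : ℂ)) ≠ 0 :=
    mul_ne_zero (by exact_mod_cast hlcP) (Finset.prod_ne_zero_iff.mpr fun i _ => hwne i)
  have haP : (P.map (algebraMap ℝ ℂ)).eval z = (a : ℂ) * ∏ i, (z - (p i : ℂ)) := by
    conv_lhs => rw [hPfac]
    simp [Polynomial.eval_prod]
  have haQ : (Q.map (algebraMap ℝ ℂ)).eval z
      = ∑ i, ((c i * a : ℝ) : ℂ) * ∏ j, (z - (p (i.succAbove j) : ℂ)) := by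
    conv_lhs => rw [hQR, hR]
    simp [Polynomial.eval_prod, Polynomial.eval_finset_sum]
  have hQz : (Q.map (algebraMap ℝ ℂ)).eval z
      = (∑ i, (c i : ℂ) / (z - (p i : ℂ))) * ((a : ℂ) * ∏ k, (z - (p k : ℂ))) := by
    rw [haQ, Finset.sum_mul]
    refine Finset.sum_congr rfl fun i _ => ?_
    rw [Fin.prod_univ_succAbove (fun k => z - (p k : ℂ)) i]
    have := hwne i
    push_cast
    field_simp
  have hadd : (P.map (algebraMap ℝ ℂ)).eval z + (Q.map (algebraMap ℝ ℂ)).eval z = 0 := by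
    rw [← Polynomial.eval_add, ← Polynomial.map_add]
    exact hz
  have hkey : (1 : ℂ) + ∑ i, (c i : ℂ) / (z - (p i : ℂ)) = 0 := by
    have hmul : ((1 : ℂ) + ∑ i, (c i : ℂ) / (z - (p i : ℂ)))
        * ((a : ℂ) * ∏ k, (z - (p k : ℂ))) = 0 := by
      rw [add_mul, one_mul, ← hQz, ← haP]
      exact hadd
    rcases mul_eq_zero.mp hmul with h | h
    · exact h
    · exact absurd h hPzne
  -- take real parts
  have hterm : ∀ i : Fin (m + 1), ((c i : ℂ) / (z - (p i : ℂ))).re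
      = c i * (z.re - p i) / ((z.re - p i) * (z.re - p i) + z.im * z.im) := by
    intro i
    rw [Complex.div_re, Complex.normSq_apply]
    simp only [Complex.sub_re, Complex.sub_im, Complex.ofReal_re, Complex.ofReal_im]
    ring
  have hre1 : (1 : ℝ) + ∑ i, c i * (z.re - p i)
      / ((z.re - p i) * (z.re - p i) + z.im * z.im) = 0 := by
    have h := congrArg Complex.re hkey
    rw [Complex.add_re, Complex.one_re, Complex.re_sum, Complex.zero_re,
      Finset.sum_congr rfl (fun i _ => hterm i)] at h
    exact h
  have hbound : ∀ i : Fin (m + 1), c i * (p i - z.re)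
      / ((z.re - p i) * (z.re - p i) + z.im * z.im) ≤ |c i| / p i := by
    intro i
    have hpi := hppos i
    have hNpos : (0:ℝ) < (z.re - p i) * (z.re - p i) + z.im * z.im := by nlinarith
    have hge : p i * (p i - z.re) ≤ (z.re - p i) * (z.re - p i) + z.im * z.im := by nlinarith
    rw [div_le_div_iff₀ hNpos hpi]
    nlinarith [mul_nonneg (mul_nonneg (sub_nonneg.mpr (le_abs_self (c i)))
        (by linarith : (0:ℝ) ≤ p i - z.re)) hpi.le,
      mul_nonneg (_root_.abs_nonneg (c i)) (sub_nonneg.mpr hge)]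
  have hfin : (1 : ℝ) ≤ ∑ i, |c i| / p i := by
    have h1 : (1 : ℝ) = ∑ i, c i * (p i - z.re)
        / ((z.re - p i) * (z.re - p i) + z.im * z.im) := by
      have e : ∀ i : Fin (m + 1), c i * (z.re - p i)
          / ((z.re - p i) * (z.re - p i) + z.im * z.im)
          = -(c i * (p i - z.re) / ((z.re - p i) * (z.re - p i) + z.im * z.im)) := by
        intro i; ring
      rw [Finset.sum_congr rfl (fun i _ => e i), Finset.sum_neg_distrib] at hre1
      linarith
    rw [h1]
    exact Finset.sum_le_sum fun i _ => hbound i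
  rw [hsame] at hfin
  linarith
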